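/- Let L > 0 and let w : ℝ → ℝ be continuous on [0, L] with w(t) > 0 for every t ∈ [0, L]. For each n ∈ ℕ let x_0^{(n)} < x_1^{(n)} < … < x_n^{(n)} be points of [0, L], and assume that for all a, b with 0 ≤ a ≤ b ≤ L, the proportion (#{i ∈ {0,…,n} : a ≤ x_i^{(n)} ≤ b})/(n+1) converges to ∫_a^b w(t) dt as n → ∞. Then max_{1 ≤ i ≤ n} (x_i^{(n)} - x_{i-1}^{(n)}) → 0 as n → ∞. -/

import Mathlib

open Finset

/-- If a family of ordered point sets in `[0, L]` obeys a continuous positive density `w`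
(the proportion of points in each subinterval `[a, b]` converges to `∫_a^b w`), then the
maximal gap between consecutive points tends to zero. -/
theorem max_gap_tendsto_zero (L : ℝ) (hL : 0 < L) (w : ℝ → ℝ)
    (hw_cont : ContinuousOn w (Set.Icc 0 L))
    (hw_pos : ∀ t ∈ Set.Icc (0:ℝ) L, 0 < w t)
    (x : ∀ n : ℕ, Fin (n + 1) → ℝ)
    (hx_mono : ∀ n, StrictMono (x n))
    (hx_mem : ∀ n i, x n i ∈ Set.Icc (0:ℝ) L)
    (hdens : ∀ a b : ℝ, 0 ≤ a → a ≤ b → b ≤ L →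
      Filter.Tendsto (fun n : ℕ =>
          (({i : Fin (n + 1) | a ≤ x n i ∧ x n i ≤ b} : Finset (Fin (n + 1))).card : ℝ)
            / (n + 1))
        Filter.atTop (nhds (∫ t in a..b, w t))) :
    Filter.Tendsto (fun n : ℕ => ⨆ i : Fin n, (x n i.succ - x n i.castSucc))
      Filter.atTop (nhds 0) := by
  -- Eventually there is a point in any fixed subinterval of positive length.
  have hexists : ∀ a b : ℝ, 0 ≤ a → a < b → b ≤ L →
      ∀ᶠ n : ℕ in Filter.atTop, ∃ i : Fin (n + 1), a ≤ x n i ∧ x n i ≤ b := by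
    intro a b ha hab hbL
    have hsub : Set.uIcc a b ⊆ Set.Icc 0 L := by
      rw [Set.uIcc_of_le hab.le]
      exact Set.Icc_subset_Icc ha hbL
    have hint : IntervalIntegrable w MeasureTheory.volume a b :=
      (hw_cont.mono hsub).intervalIntegrable
    have hpos : 0 < ∫ t in a..b, w t := by
      apply intervalIntegral.intervalIntegral_pos_of_pos_on hint ?_ hab
      intro t ht
      exact hw_pos t ⟨ha.trans ht.1.le, ht.2.le.trans hbL⟩
    have hev := (hdens a b ha hab.le hbL).eventually (eventually_gt_nhds hpos)
    filter_upwards [hev] with n hn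
    have hcard : 0 < ({i : Fin (n + 1) | a ≤ x n i ∧ x n i ≤ b} :
        Finset (Fin (n + 1))).card := by
      by_contra hc
      push_neg at hc
      interval_cases h : ({i : Fin (n + 1) | a ≤ x n i ∧ x n i ≤ b} :
        Finset (Fin (n + 1))).card
      simp at hn
    obtain ⟨i, hi⟩ := Finset.card_pos.mp hcard
    refine ⟨i, ?_⟩
    simpa using hi
  rw [Metric.tendsto_nhds]
  intro ε hε
  set δ : ℝ := ε / 6 with hδdef
  have hδ : 0 < δ := by positivity
  set K : ℕ := ⌈L / δ⌉₊ with hK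
  have hev : ∀ᶠ n : ℕ in Filter.atTop, ∀ j ∈ Finset.range K,
      ((j : ℝ) + 1) * δ ≤ L →
        ∃ i : Fin (n + 1), (j : ℝ) * δ ≤ x n i ∧ x n i ≤ ((j : ℝ) + 1) * δ := by
    rw [Filter.eventually_all_finset]
    intro j _
    by_cases h : ((j : ℝ) + 1) * δ ≤ L
    · filter_upwards [hexists ((j : ℝ) * δ) (((j : ℝ) + 1) * δ) (by positivity)
        (by nlinarith) h] with n hn _
      exact hn
    · filter_upwards with n hc
      exact absurd hc h
  filter_upwards [hev] with n hn
  rw [Real.dist_eq, sub_zero]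
  have key : ∀ i : Fin n, x n i.succ - x n i.castSucc ≤ ε / 2 := by
    intro i
    by_contra hcon
    push_neg at hcon
    set c := x n i.castSucc with hc
    set d := x n i.succ with hd
    have hc0 : 0 ≤ c := (hx_mem n i.castSucc).1
    have hdL : d ≤ L := (hx_mem n i.succ).2
    set j : ℕ := ⌊c / δ⌋₊ + 1 with hj
    have hcj : c < (j : ℝ) * δ := by
      have := Nat.lt_floor_add_one (c / δ)
      rw [hj]
      push_cast
      rw [← div_lt_iff₀ hδ] at *
      linarith
    have hj2 : (j : ℝ) * δ ≤ c + δ := by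
      have h1 : (⌊c / δ⌋₊ : ℝ) ≤ c / δ := Nat.floor_le (by positivity)
      have h2 : (⌊c / δ⌋₊ : ℝ) * δ ≤ c := by
        rw [← le_div_iff₀ hδ]; exact h1
      rw [hj]
      push_cast
      nlinarith
    have hjd : ((j : ℝ) + 1) * δ < d := by nlinarith
    have hjL : ((j : ℝ) + 1) * δ ≤ L := hjd.le.trans hdL
    have hjK : j < K := by
      have h1 : ((j : ℝ) + 1) ≤ L / δ := by
        rw [le_div_iff₀ hδ]; nlinarith
      have h2 : L / δ ≤ (K : ℝ) := Nat.le_ceil _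
      have : ((j : ℝ) + 1) ≤ (K : ℝ) := h1.trans h2
      exact_mod_cast Nat.lt_of_lt_of_le (Nat.lt_succ_self j) (by exact_mod_cast this)
    obtain ⟨i', h1, h2⟩ := hn j (Finset.mem_range.mpr hjK) hjL
    have hci' : c < x n i' := lt_of_lt_of_le hcj h1
    have hi'd : x n i' < d := lt_of_le_of_lt h2 hjd
    have hlt : i.castSucc < i' := (hx_mono n).lt_iff_lt.mp hci'
    have hle : i.succ ≤ i' := Fin.castSucc_lt_iff_succ_le.mp hlt
    have : d ≤ x n i' := (hx_mono n).monotone hle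
    linarith
  have h0 : 0 ≤ ⨆ i : Fin n, (x n i.succ - x n i.castSucc) :=
    Real.iSup_nonneg fun i => sub_nonneg.2 ((hx_mono n).monotone (Fin.castSucc_lt_succ : i.castSucc < i.succ).le)
  have h1 : (⨆ i : Fin n, (x n i.succ - x n i.castSucc)) ≤ ε / 2 :=
    Real.iSup_le key (by positivity)
  rw [abs_of_nonneg h0]
  linarith
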